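/- For the function u_t(x,y) = log(2e^x/(1+t²+2te^x cos y+e^{2x})) with t ≥ 0, for every fixed y ∈ ℝ the improper integral ∫_{-∞}^{∞} e^{u_t(x,y)} dx equals (2/√(1+t² sin²y)) · (π/2 − arctan(t cos y / √(1+t² sin²y))), and the supremum over y ∈ ℝ of this integral equals π + 2 arctan(t). -/

import Mathlib

open Real MeasureTheory Filter Set Topology

lemma key_int (t : ℝ) (ht : 0 ≤ t) (y : ℝ) :
    ∫ x : ℝ, 2 * Real.exp x /
        (1 + t^2 + 2 * t * Real.exp x * Real.cos y + Real.exp (2*x))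
      = (2 / Real.sqrt (1 + t^2 * (Real.sin y)^2)) *
          (π/2 - Real.arctan (t * Real.cos y / Real.sqrt (1 + t^2 * (Real.sin y)^2))) := by
  set s : ℝ := Real.sqrt (1 + t^2 * (Real.sin y)^2) with hs_def
  have hs1 : 1 ≤ s := Real.one_le_sqrt.mpr (by nlinarith [sq_nonneg (t * Real.sin y)])
  have hs0 : 0 < s := lt_of_lt_of_le one_pos hs1
  have hsne : s ≠ 0 := ne_of_gt hs0
  have hs2 : s^2 = 1 + t^2 * (Real.sin y)^2 :=
    Real.sq_sqrt (by nlinarith [sq_nonneg (t * Real.sin y)])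
  set c : ℝ := Real.cos y with hc_def
  set D : ℝ → ℝ := fun x => 1 + t^2 + 2 * t * Real.exp x * Real.cos y + Real.exp (2*x) with hD_def
  have hD : ∀ x, D x = s^2 + (Real.exp x + t*c)^2 := by
    intro x
    have h2 : Real.exp (2*x) = Real.exp x ^ 2 := by
      rw [two_mul, Real.exp_add, sq]
    simp only [hD_def, h2, hs2, hc_def]
    nlinarith [Real.sin_sq_add_cos_sq y]
  have hD1 : ∀ x, 1 ≤ D x := by
    intro x
    rw [hD x]
    nlinarith [sq_nonneg (Real.exp x + t*c), hs1]
  have hD0 : ∀ x, 0 < D x := fun x => lt_of_lt_of_le one_pos (hD1 x)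
  set F : ℝ → ℝ := fun x => (2/s) * Real.arctan ((Real.exp x + t*c)/s) with hF_def
  set f' : ℝ → ℝ := fun x => 2 * Real.exp x / D x with hf'_def
  have hderiv : ∀ x, HasDerivAt F (f' x) x := by
    intro x
    have h1 : HasDerivAt (fun x => (Real.exp x + t*c)/s) (Real.exp x / s) x :=
      ((Real.hasDerivAt_exp x).add_const (t*c)).div_const s
    have h2 := (Real.hasDerivAt_arctan ((Real.exp x + t*c)/s)).comp x h1
    have h3 := h2.const_mul (2/s)
    refine h3.congr_deriv ?_
    have hne : D x ≠ 0 := ne_of_gt (hD0 x)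
    have h4 : 1 + ((Real.exp x + t*c)/s)^2 = D x / s^2 := by
      rw [hD x]; field_simp
    rw [hf'_def]
    simp only [Function.comp]
    rw [h4]
    field_simp
  have hbound : ∀ x, ‖f' x‖ ≤ f' x := by
    intro x
    have : 0 ≤ f' x := by
      apply div_nonneg (by positivity) (le_of_lt (hD0 x))
    rw [Real.norm_eq_abs, abs_of_nonneg this]
  have hcont : Continuous f' := by
    apply Continuous.div (by continuity) (by continuity)
    exact fun x => ne_of_gt (hD0 x)
  have hint : Integrable f' := by
    have h1 : IntegrableOn f' (Iic (0:ℝ)) := by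
      apply Integrable.mono' ((integrableOn_exp_Iic 0).const_mul 2)
        (hcont.aestronglyMeasurable.restrict)
      filter_upwards [] with x
      rw [Real.norm_eq_abs, abs_of_nonneg (div_nonneg (by positivity) (le_of_lt (hD0 x)))]
      exact div_le_self (by positivity) (hD1 x)
    have h2 : IntegrableOn f' (Ioi (0:ℝ)) := by
      apply Integrable.mono' ((exp_neg_integrableOn_Ioi 0 one_pos).const_mul (4*(1+t^2)))
        (hcont.aestronglyMeasurable.restrict)
      filter_upwards [] with x
      rw [Real.norm_eq_abs, abs_of_nonneg (div_nonneg (by positivity) (le_of_lt (hD0 x)))]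
      have hu : (0:ℝ) < Real.exp x := Real.exp_pos x
      have hDge : (Real.exp x - t)^2 + 1 ≤ D x := by
        rw [hD x]
        have h1 : -1 ≤ c := Real.neg_one_le_cos y
        have h2 : c ≤ 1 := Real.cos_le_one y
        nlinarith [hs2, Real.sin_sq_add_cos_sq y, mul_nonneg (mul_nonneg ht (by linarith : (0:ℝ) ≤ 1 + c)) hu.le]
      rw [neg_one_mul, Real.exp_neg, div_le_iff₀ (hD0 x)]
      have hinv : Real.exp x * (Real.exp x)⁻¹ = 1 := mul_inv_cancel₀ (ne_of_gt hu)
      have hip : 0 < (Real.exp x)⁻¹ := by positivity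
      have key : 2 * (Real.exp x * Real.exp x) ≤ 4*(1+t^2) * ((Real.exp x - t)^2 + 1) := by
        nlinarith [sq_nonneg (Real.exp x - t), sq_nonneg (t*(Real.exp x - t)), sq_nonneg t]
      calc 2 * Real.exp x = 2 * (Real.exp x * Real.exp x) * (Real.exp x)⁻¹ := by
            field_simp
        _ ≤ 4*(1+t^2) * ((Real.exp x - t)^2 + 1) * (Real.exp x)⁻¹ :=
            mul_le_mul_of_nonneg_right key (le_of_lt hip)
        _ = 4*(1+t^2) * (Real.exp x)⁻¹ * ((Real.exp x - t)^2 + 1) := by ring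
        _ ≤ 4*(1+t^2) * (Real.exp x)⁻¹ * D x :=
            mul_le_mul_of_nonneg_left hDge (by positivity)
    have := h1.union h2
    rwa [Iic_union_Ioi, integrableOn_univ] at this
  have hbot : Tendsto F atBot (𝓝 ((2/s) * Real.arctan (t*c/s))) := by
    have h1 : Tendsto (fun x => (Real.exp x + t*c)/s) atBot (𝓝 ((0 + t*c)/s)) :=
      ((Real.tendsto_exp_atBot).add tendsto_const_nhds).div_const s
    rw [zero_add] at h1
    exact ((Real.continuous_arctan.tendsto _).comp h1).const_mul _
  have htop : Tendsto F atTop (𝓝 ((2/s) * (π/2))) := by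
    have h1 : Tendsto (fun x => (Real.exp x + t*c)/s) atTop atTop :=
      (Real.tendsto_exp_atTop.atTop_add tendsto_const_nhds).atTop_div_const hs0
    have h2 : Tendsto Real.arctan atTop (𝓝 (π/2)) :=
      Real.tendsto_arctan_atTop.mono_right nhdsWithin_le_nhds
    exact (h2.comp h1).const_mul _
  have := integral_of_hasDerivAt_of_tendsto hderiv hint hbot htop
  rw [hf'_def] at this
  simp only [hD_def] at this
  rw [this]
  ring

theorem stmt_4 (t : ℝ) (ht : 0 ≤ t) :
    (∀ y : ℝ,
      ∫ x : ℝ, 2 * Real.exp x /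
          (1 + t^2 + 2 * t * Real.exp x * Real.cos y + Real.exp (2*x))
        = (2 / Real.sqrt (1 + t^2 * (Real.sin y)^2)) *
            (π/2 - Real.arctan (t * Real.cos y / Real.sqrt (1 + t^2 * (Real.sin y)^2)))) ∧
    (⨆ y : ℝ,
      ∫ x : ℝ, 2 * Real.exp x /
          (1 + t^2 + 2 * t * Real.exp x * Real.cos y + Real.exp (2*x)))
      = π + 2 * Real.arctan t := by
  refine ⟨key_int t ht, ?_⟩
  have hub : ∀ y : ℝ, (∫ x : ℝ, 2 * Real.exp x /
      (1 + t^2 + 2 * t * Real.exp x * Real.cos y + Real.exp (2*x))) ≤ π + 2 * Real.arctan t := by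
    intro y
    rw [key_int t ht y]
    set s : ℝ := Real.sqrt (1 + t^2 * (Real.sin y)^2) with hs_def
    have hs1 : 1 ≤ s := Real.one_le_sqrt.mpr (by nlinarith [sq_nonneg (t * Real.sin y)])
    have hs0 : 0 < s := lt_of_lt_of_le one_pos hs1
    have harg : -t ≤ t * Real.cos y / s := by
      rw [le_div_iff₀ hs0]
      have h1 : -1 ≤ Real.cos y := Real.neg_one_le_cos y
      nlinarith [Real.cos_le_one y]
    have h2 : -Real.arctan t ≤ Real.arctan (t * Real.cos y / s) := by
      rw [← Real.arctan_neg]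
      exact Real.arctan_strictMono.monotone harg
    have h3 : π/2 - Real.arctan (t * Real.cos y / s) ≤ π/2 + Real.arctan t := by linarith
    have h4 : 0 ≤ π/2 - Real.arctan (t * Real.cos y / s) :=
      by linarith [Real.arctan_lt_pi_div_two (t * Real.cos y / s)]
    have h5 : 2/s ≤ 2 := by
      rw [div_le_iff₀ hs0]; linarith
    have h6 : 0 ≤ 2/s := by positivity
    calc (2/s) * (π/2 - Real.arctan (t * Real.cos y / s))
        ≤ 2 * (π/2 + Real.arctan t) := mul_le_mul h5 h3 h4 (by norm_num)
      _ = π + 2 * Real.arctan t := by ring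
  apply le_antisymm
  · exact ciSup_le hub
  · have hval : (∫ x : ℝ, 2 * Real.exp x /
        (1 + t^2 + 2 * t * Real.exp x * Real.cos π + Real.exp (2*x))) = π + 2 * Real.arctan t := by
      rw [key_int t ht π]
      simp [Real.sin_pi, Real.cos_pi, Real.arctan_neg]
      ring
    rw [← hval]
    exact le_ciSup ⟨π + 2 * Real.arctan t, fun z ⟨y, hy⟩ => hy ▸ hub y⟩ π
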